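/- Let R be a commutative ring and (a_m)_{m≥0} a sequence in R with a₀ = 1. Then the formal power series Σ_{m≥0} a_m t^m is a unit in R[[t]] and its multiplicative inverse is Σ_{m≥0} ( Σ_{β ∈ C^m} M_β · ∏_{i≥1} a_i^{β_i} ) t^m. -/

import Mathlib

/-!
STATEMENT 19 (explicit inverse of a formal power series with constant term 1).

For `m ∈ ℕ`, `C^m = {(r₁, r₂, …) : rᵢ ∈ ℕ, Σᵢ i·rᵢ = m}`; since `i·rᵢ ≤ m` forces
`rᵢ ≤ m` and `rᵢ = 0` for `i > m`, such a tuple is faithfully encoded as a function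
`β : Fin m → Fin (m+1)`, where `β i` records `r_{i+1}`.
-/

open Finset

/-- The set `C^m` of tuples `(r₁, …, r_m)` of natural numbers with `Σᵢ i·rᵢ = m`,
encoded as functions `Fin m → Fin (m+1)` (`β i` records `r_{i+1}`). -/
def Cset (m : ℕ) : Finset (Fin m → Fin (m + 1)) :=
  Finset.univ.filter fun β => ∑ i : Fin m, (i.1 + 1) * (β i).1 = m

/-- `M_β = (−1)^{Σᵢ βᵢ} · (Σᵢ βᵢ choose β₁, β₂, …)` (a signed multinomial
coefficient). -/
def Mcoef {m : ℕ} (β : Fin m → Fin (m + 1)) : ℤ :=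
  (-1) ^ (∑ i : Fin m, (β i).1) * (Nat.multinomial Finset.univ fun i => (β i).1)

namespace Aux19

@[to_additive]
lemma prod_split {M : Type*} [CommMonoid M] {n : ℕ} (j : Fin n) (g : Fin n → M) :
    ∏ i : Fin n, g i = g j * ∏ i ∈ univ.erase j, g i :=
  (Finset.mul_prod_erase univ g (mem_univ j)).symm

@[to_additive]
lemma prod_update_split {M : Type*} [CommMonoid M] {n : ℕ} (j : Fin n) (f : Fin n → ℕ)
    (v : ℕ) (g : Fin n → ℕ → M) :
    ∏ i : Fin n, g i (Function.update f j v i) = g j v * ∏ i ∈ univ.erase j, g i (f i) := by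
  rw [prod_split j (fun i => g i (Function.update f j v i)), Function.update_self]
  exact congrArg _ (Finset.prod_congr rfl fun i hi => by
    rw [Function.update_of_ne (Finset.ne_of_mem_erase hi)])

lemma multinomial_ext {α α' : Type*} (s : Finset α) (t : Finset α') (f : α → ℕ) (g : α' → ℕ)
    (hs : ∑ i ∈ s, f i = ∑ i ∈ t, g i)
    (hp : ∏ i ∈ s, (f i).factorial = ∏ i ∈ t, (g i).factorial) :
    Nat.multinomial s f = Nat.multinomial t g := by
  have h1 := Nat.multinomial_spec s f
  have h2 := Nat.multinomial_spec t g
  have hpos : 0 < ∏ i ∈ s, (f i).factorial :=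
    Finset.prod_pos fun i _ => Nat.factorial_pos _
  apply Nat.eq_of_mul_eq_mul_left hpos
  rw [h1, hs, ← h2, hp]

lemma pascal {n : ℕ} (f : Fin n → ℕ) (hf : 0 < ∑ i, f i) :
    Nat.multinomial univ f
      = ∑ j ∈ univ.filter fun j => 0 < f j,
          Nat.multinomial univ (Function.update f j (f j - 1)) := by
  have hpos : 0 < ∏ i, (f i).factorial := Finset.prod_pos fun i _ => Nat.factorial_pos _
  apply Nat.eq_of_mul_eq_mul_left hpos
  rw [Finset.mul_sum]
  have key : ∀ j ∈ univ.filter fun j => 0 < f j,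
      (∏ i, (f i).factorial) * Nat.multinomial univ (Function.update f j (f j - 1))
        = f j * (∑ i, f i - 1).factorial := by
    intro j hj
    have hj' : 0 < f j := (mem_filter.1 hj).2
    have hprod : ∏ i, (f i).factorial
        = f j * ∏ i, (Function.update f j (f j - 1) i).factorial := by
      rw [prod_update_split j f (f j - 1) (fun _ v => v.factorial),
        prod_split j (fun i => (f i).factorial), ← mul_assoc, Nat.mul_factorial_pred hj'.ne']
    have hsum : ∑ i, Function.update f j (f j - 1) i = ∑ i, f i - 1 := by
      rw [sum_update_split j f (f j - 1) (fun _ v => v),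
        sum_split j f]
      omega
    rw [hprod, mul_assoc, Nat.multinomial_spec, hsum]
  rw [Finset.sum_congr rfl key, ← Finset.sum_mul]
  have hfil : ∑ j ∈ univ.filter (fun j => 0 < f j), f j = ∑ j, f j :=
    Finset.sum_filter_of_ne fun x _ hx => Nat.pos_of_ne_zero (by intro h; exact hx (by simp [h]))
  rw [hfil, Nat.multinomial_spec, ← Nat.mul_factorial_pred hf.ne']

@[to_additive]
lemma pad_prod {M : Type*} [CommMonoid M] {m n : ℕ} (hm : m ≤ n) (β : Fin m → ℕ)
    (F : ℕ → ℕ → M) (hF : ∀ k, F k 0 = 1) :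
    (∏ i : Fin n, F i.1 (if h : i.1 < m then β ⟨i.1, h⟩ else 0))
      = ∏ i : Fin m, F i.1 (β i) := by
  rw [Fin.prod_univ_eq_prod_range (fun k => F k (if h : k < m then β ⟨k, h⟩ else 0)) n,
      ← Finset.prod_subset (Finset.range_subset_range.2 hm) (fun k _ hk => by
        rw [dif_neg (by simpa using hk)]; exact hF k),
      ← Fin.prod_univ_eq_prod_range (fun k => F k (if h : k < m then β ⟨k, h⟩ else 0)) m]
  exact Finset.prod_congr rfl fun i _ => by rw [dif_pos i.2]

def Dset (n m : ℕ) : Finset (Fin n → ℕ) :=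
  (Fintype.piFinset fun _ : Fin n => Finset.range (n + 1)).filter
    fun γ => ∑ i : Fin n, (i.1 + 1) * γ i = m

lemma Dset_bound {n m : ℕ} {γ : Fin n → ℕ} (hγ : ∑ i : Fin n, (i.1 + 1) * γ i = m)
    (k : Fin n) : (k.1 + 1) * γ k ≤ m := by
  rw [← hγ]
  exact Finset.single_le_sum (f := fun i : Fin n => (i.1 + 1) * γ i)
    (fun i _ => Nat.zero_le _) (mem_univ k)

lemma mem_Dset {n m : ℕ} (hm : m ≤ n) {γ : Fin n → ℕ} :
    γ ∈ Dset n m ↔ ∑ i : Fin n, (i.1 + 1) * γ i = m := by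
  simp only [Dset, mem_filter, Fintype.mem_piFinset, mem_range]
  refine ⟨fun h => h.2, fun h => ⟨fun k => ?_, h⟩⟩
  have h1 := Dset_bound h k
  have h2 : γ k ≤ (k.1 + 1) * γ k := Nat.le_mul_of_pos_left _ (Nat.succ_pos _)
  omega

lemma pad_zero {n m : ℕ} {γ : Fin n → ℕ} (hγ : ∑ i : Fin n, (i.1 + 1) * γ i = m)
    {k : Fin n} (hk : m ≤ k.1) : γ k = 0 := by
  have h1 := Dset_bound hγ k
  by_contra h
  have h2 : k.1 + 1 ≤ (k.1 + 1) * γ k := Nat.le_mul_of_pos_right _ (Nat.pos_of_ne_zero h)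
  omega

variable {R : Type*} [CommRing R]

/-- The candidate inverse coefficients. -/
noncomputable def Bcoef (a : ℕ → R) (m : ℕ) : R :=
  ∑ β ∈ Cset m, (Mcoef β : R) * ∏ i : Fin m, a (i.1 + 1) ^ (β i).1

open Fin.NatCast in
lemma reindex (a : ℕ → R) {m n : ℕ} (hm : m ≤ n) :
    Bcoef a m
      = ∑ γ ∈ Dset n m,
          ((-1 : R) ^ (∑ i, γ i) * (Nat.multinomial univ γ : R))
            * ∏ i : Fin n, a (i.1 + 1) ^ γ i := by
  unfold Bcoef
  refine Finset.sum_nbij'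
    (i := fun β => fun i : Fin n => if h : i.1 < m then ((β ⟨i.1, h⟩ : Fin (m+1)) : ℕ) else 0)
    (j := fun γ => fun i : Fin m => ((γ ⟨i.1, lt_of_lt_of_le i.2 hm⟩ : ℕ) : Fin (m + 1)))
    ?_ ?_ ?_ ?_ ?_
  · intro β hβ
    have hβ' : ∑ i : Fin m, (i.1 + 1) * (β i).1 = m := by
      simpa [Cset] using hβ
    rw [mem_Dset hm]
    rw [pad_sum hm (fun i => ((β i : Fin (m+1)) : ℕ)) (fun k v => (k + 1) * v)
      (fun k => mul_zero _)]
    exact hβ'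
  · intro γ hγ
    have hγ' : ∑ i : Fin n, (i.1 + 1) * γ i = m := (mem_Dset hm).1 hγ
    have hbd : ∀ k : Fin n, γ k ≤ m := fun k => by
      have h1 := Dset_bound hγ' k
      have h2 : γ k ≤ (k.1 + 1) * γ k := Nat.le_mul_of_pos_left _ (Nat.succ_pos _)
      omega
    have hval : ∀ i : Fin m,
        (((γ ⟨i.1, lt_of_lt_of_le i.2 hm⟩ : ℕ) : Fin (m + 1)) : ℕ)
          = γ ⟨i.1, lt_of_lt_of_le i.2 hm⟩ := fun i => by
      rw [Fin.val_natCast]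
      exact Nat.mod_eq_of_lt (Nat.lt_succ_of_le (hbd _))
    simp only [Cset, mem_filter, mem_univ, true_and]
    calc ∑ i : Fin m, (i.1 + 1) * (((γ ⟨i.1, lt_of_lt_of_le i.2 hm⟩ : ℕ) : Fin (m + 1)) : ℕ)
        = ∑ i : Fin m, (i.1 + 1) * γ ⟨i.1, lt_of_lt_of_le i.2 hm⟩ :=
          Finset.sum_congr rfl fun i _ => by rw [hval]
      _ = ∑ i : Fin n, (i.1 + 1) * γ i := by
          rw [← pad_sum hm (fun i : Fin m => γ ⟨i.1, lt_of_lt_of_le i.2 hm⟩)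
            (fun k v => (k + 1) * v) (fun k => mul_zero _)]
          refine Finset.sum_congr rfl fun i _ => ?_
          by_cases h : i.1 < m
          · rw [dif_pos h]
          · rw [dif_neg h, pad_zero hγ' (le_of_not_gt h)]
      _ = m := hγ'
  · intro β hβ
    funext i
    dsimp only
    rw [dif_pos i.2]
    exact Fin.cast_val_eq_self _
  · intro γ hγ
    have hγ' : ∑ i : Fin n, (i.1 + 1) * γ i = m := (mem_Dset hm).1 hγ
    have hbd : ∀ k : Fin n, γ k ≤ m := fun k => by
      have h1 := Dset_bound hγ' k
      have h2 : γ k ≤ (k.1 + 1) * γ k := Nat.le_mul_of_pos_left _ (Nat.succ_pos _)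
      omega
    funext k
    dsimp only
    by_cases h : k.1 < m
    · rw [dif_pos h, Fin.val_natCast]
      exact Nat.mod_eq_of_lt (Nat.lt_succ_of_le (hbd _))
    · rw [dif_neg h, pad_zero hγ' (le_of_not_gt h)]
  · intro β hβ
    have h1 : (∑ i : Fin n, if h : i.1 < m then ((β ⟨i.1, h⟩ : Fin (m+1)) : ℕ) else 0)
        = ∑ i : Fin m, ((β i : Fin (m+1)) : ℕ) :=
      pad_sum hm (fun i => ((β i : Fin (m+1)) : ℕ)) (fun _ v => v) (fun _ => rfl)
    have h2 : Nat.multinomial univ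
          (fun i : Fin n => if h : i.1 < m then ((β ⟨i.1, h⟩ : Fin (m+1)) : ℕ) else 0)
        = Nat.multinomial univ (fun i : Fin m => ((β i : Fin (m+1)) : ℕ)) := by
      refine multinomial_ext _ _ _ _ h1 ?_
      exact pad_prod hm (fun i => ((β i : Fin (m+1)) : ℕ)) (fun _ v => v.factorial)
        (fun _ => rfl)
    have h3 : (∏ i : Fin n,
          a (i.1 + 1) ^ (if h : i.1 < m then ((β ⟨i.1, h⟩ : Fin (m+1)) : ℕ) else 0))
        = ∏ i : Fin m, a (i.1 + 1) ^ ((β i : Fin (m+1)) : ℕ) :=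
      pad_prod hm (fun i => ((β i : Fin (m+1)) : ℕ)) (fun k v => a (k + 1) ^ v)
        (fun k => pow_zero _)
    rw [Mcoef]
    push_cast
    rw [h1, h2, h3]

lemma Bcoef_zero (a : ℕ → R) : Bcoef a 0 = 1 := by
  haveI : Unique (Fin 0 → Fin 1) := ⟨⟨fun _ => 0⟩, fun f => funext fun i => i.elim0⟩
  unfold Bcoef
  have h : Cset 0 = {fun _ => 0} := by
    apply Finset.eq_of_subset_of_card_le
    · intro β hβ
      simp only [Finset.mem_singleton]
      exact Subsingleton.elim _ _
    · rw [Finset.card_singleton]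
      have : (fun _ => 0) ∈ Cset 0 := Finset.mem_filter.2 ⟨mem_univ _, by simp⟩
      exact Finset.card_pos.2 ⟨_, this⟩
  rw [h, Finset.sum_singleton]
  simp [Mcoef]

lemma key (a : ℕ → R) (ha : a 0 = 1) {n : ℕ} (hn : 0 < n) :
    ∑ k ∈ range (n + 1), a k * Bcoef a (n - k) = 0 := by
  rw [Finset.sum_range_succ']
  simp only [Nat.sub_zero, ha, one_mul]
  have hmain : ∑ i ∈ range n, a (i + 1) * Bcoef a (n - (i + 1)) = - Bcoef a n := by
    have hrw : ∀ i ∈ range n, a (i + 1) * Bcoef a (n - (i + 1))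
        = a (i + 1) * ∑ γ ∈ Dset n (n - (i + 1)),
            ((-1 : R) ^ (∑ i, γ i) * (Nat.multinomial univ γ : R))
              * ∏ i : Fin n, a (i.1 + 1) ^ γ i := fun i _ => by
      rw [reindex a (Nat.sub_le _ _)]
    rw [Finset.sum_congr rfl hrw, reindex a (le_refl n)]
    rw [← Fin.sum_univ_eq_sum_range (fun k => a (k + 1) * ∑ γ ∈ Dset n (n - (k + 1)),
        ((-1 : R) ^ (∑ i, γ i) * (Nat.multinomial univ γ : R))
          * ∏ i : Fin n, a (i.1 + 1) ^ γ i) n]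
    simp only [Finset.mul_sum]
    rw [Finset.sum_sigma' univ (fun j : Fin n => Dset n (n - (j.1 + 1)))
      (fun j γ => a (j.1 + 1) * (((-1 : R) ^ (∑ i, γ i) * (Nat.multinomial univ γ : R))
          * ∏ i : Fin n, a (i.1 + 1) ^ γ i))]
    have hper : ∀ β ∈ Dset n n,
        -(((-1 : R) ^ (∑ i, β i) * (Nat.multinomial univ β : R))
            * ∏ i : Fin n, a (i.1 + 1) ^ β i)
        = ∑ j ∈ univ.filter fun j => 0 < β j,
            ((-1 : R) ^ ((∑ i, β i) - 1)
              * (Nat.multinomial univ (Function.update β j (β j - 1)) : R))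
              * ∏ i : Fin n, a (i.1 + 1) ^ β i := by
      intro β hβ
      have hβ' : ∑ i : Fin n, (i.1 + 1) * β i = n := (mem_Dset (le_refl n)).1 hβ
      have hpos : 0 < ∑ i, β i := by
        rcases Nat.eq_zero_or_pos (∑ i, β i) with h | h
        · exfalso
          rw [Finset.sum_eq_zero_iff] at h
          have : ∑ i : Fin n, (i.1 + 1) * β i = 0 :=
            Finset.sum_eq_zero fun i _ => by rw [h i (mem_univ i), mul_zero]
          omega
        · exact h
      rw [← Finset.sum_mul, ← Finset.mul_sum, ← Nat.cast_sum, ← pascal β hpos]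
      have hss : ∑ i, β i = ((∑ i, β i) - 1) + 1 := (Nat.succ_pred_eq_of_pos hpos).symm
      rw [hss, pow_succ, Nat.add_sub_cancel]
      ring
    rw [show -(∑ β ∈ Dset n n, ((-1 : R) ^ (∑ i, β i) * (Nat.multinomial univ β : R))
          * ∏ i : Fin n, a (i.1 + 1) ^ β i)
        = ∑ β ∈ Dset n n, ∑ j ∈ univ.filter fun j => 0 < β j,
            ((-1 : R) ^ ((∑ i, β i) - 1)
              * (Nat.multinomial univ (Function.update β j (β j - 1)) : R))
              * ∏ i : Fin n, a (i.1 + 1) ^ β i from by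
      rw [← Finset.sum_congr rfl hper, ← Finset.sum_neg_distrib]]
    rw [Finset.sum_sigma' (Dset n n) (fun β => univ.filter fun j => 0 < β j)
      (fun β j => ((-1 : R) ^ ((∑ i, β i) - 1)
        * (Nat.multinomial univ (Function.update β j (β j - 1)) : R))
        * ∏ i : Fin n, a (i.1 + 1) ^ β i)]
    refine Finset.sum_nbij'
      (i := fun p => ⟨Function.update p.2 p.1 (p.2 p.1 + 1), p.1⟩)
      (j := fun q => ⟨q.2, Function.update q.1 q.2 (q.1 q.2 - 1)⟩)
      ?_ ?_ ?_ ?_ ?_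
    · rintro ⟨j, γ⟩ hp
      dsimp only at hp ⊢
      rw [Finset.mem_sigma] at hp
      obtain ⟨-, hγ⟩ := hp
      have hγ' : ∑ i : Fin n, (i.1 + 1) * γ i = n - (j.1 + 1) :=
        (mem_Dset (Nat.sub_le _ _)).1 hγ
      rw [Finset.mem_sigma]
      constructor
      · rw [mem_Dset (le_refl n),
          sum_update_split j γ (γ j + 1) (fun i v => (i.1 + 1) * v)]
        rw [sum_split j (fun i : Fin n => (i.1 + 1) * γ i)] at hγ'
        have hj : j.1 + 1 ≤ n := j.2
        have hexp : (j.1 + 1) * (γ j + 1) = (j.1 + 1) * γ j + (j.1 + 1) := by ring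
        omega
      · simp only [mem_filter, mem_univ, true_and, Function.update_self]
        omega
    · rintro ⟨β, j⟩ hq
      dsimp only at hq ⊢
      rw [Finset.mem_sigma] at hq
      obtain ⟨hβ, hj⟩ := hq
      have hβ' : ∑ i : Fin n, (i.1 + 1) * β i = n := (mem_Dset (le_refl n)).1 hβ
      have hj' : 0 < β j := by simpa using hj
      rw [Finset.mem_sigma]
      refine ⟨mem_univ _, ?_⟩
      show Function.update β j (β j - 1) ∈ Dset n (n - (j.1 + 1))
      rw [mem_Dset (Nat.sub_le _ _),
        sum_update_split j β (β j - 1) (fun i v => (i.1 + 1) * v)]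
      rw [sum_split j (fun i : Fin n => (i.1 + 1) * β i)] at hβ'
      have hj2 : j.1 + 1 ≤ (j.1 + 1) * β j := Nat.le_mul_of_pos_right _ hj'
      obtain ⟨c, hc⟩ : ∃ c, β j = c + 1 := ⟨β j - 1, (Nat.succ_pred_eq_of_pos hj').symm⟩
      have hle : (j.1 + 1) * (β j - 1) + (j.1 + 1) = (j.1 + 1) * β j := by
        rw [hc, Nat.add_sub_cancel, mul_add, mul_one]
      omega
    · rintro ⟨j, γ⟩ hp
      have h : Function.update (Function.update γ j (γ j + 1)) j
          (Function.update γ j (γ j + 1) j - 1) = γ := by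
        rw [Function.update_self, Function.update_idem, Nat.add_sub_cancel,
          Function.update_eq_self]
      exact congrArg (fun x => (⟨j, x⟩ : (_ : Fin n) × (Fin n → ℕ))) h
    · rintro ⟨β, j⟩ hq
      rw [Finset.mem_sigma] at hq
      have hj' : 0 < β j := by simpa using hq.2
      have h : Function.update (Function.update β j (β j - 1)) j
          (Function.update β j (β j - 1) j + 1) = β := by
        rw [Function.update_self, Function.update_idem, Nat.sub_add_cancel hj',
          Function.update_eq_self]
      exact congrArg (fun x => (⟨x, j⟩ : (_ : Fin n → ℕ) × Fin n)) h
    · rintro ⟨j, γ⟩ hp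
      dsimp only at hp ⊢
      rw [Finset.mem_sigma] at hp
      obtain ⟨-, hγ⟩ := hp
      have hupd : Function.update (Function.update γ j (γ j + 1)) j
          (Function.update γ j (γ j + 1) j - 1) = γ := by
        rw [Function.update_self, Function.update_idem, Nat.add_sub_cancel,
          Function.update_eq_self]
      have hsum : ∑ i, Function.update γ j (γ j + 1) i = (∑ i, γ i) + 1 := by
        rw [sum_update_split j γ (γ j + 1) (fun _ v => v), sum_split j γ]
        omega
      have hprod : ∏ i : Fin n, a (i.1 + 1) ^ Function.update γ j (γ j + 1) i
          = a (j.1 + 1) * ∏ i : Fin n, a (i.1 + 1) ^ γ i := by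
        rw [prod_update_split j γ (γ j + 1) (fun i v => a (i.1 + 1) ^ v),
          prod_split j (fun i : Fin n => a (i.1 + 1) ^ γ i), pow_succ]
        ring
      rw [hupd, hsum, hprod, Nat.add_sub_cancel]
      ring
  rw [hmain]
  ring

end Aux19

/-- Let `R` be a commutative ring and `(a_m)_{m≥0}` a sequence in `R` with `a₀ = 1`.
Then the formal power series `Σ_{m≥0} a_m t^m` is a unit in `R[[t]]` and its
multiplicative inverse is `Σ_{m≥0} ( Σ_{β ∈ C^m} M_β · ∏_{i≥1} a_i^{β_i} ) t^m`. -/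
theorem powerSeries_explicit_inverse (R : Type*) [CommRing R] (a : ℕ → R)
    (ha : a 0 = 1) :
    IsUnit (PowerSeries.mk a) ∧
      (PowerSeries.mk a) *
        (PowerSeries.mk fun m =>
          ∑ β ∈ Cset m, (Mcoef β : R) * ∏ i : Fin m, a (i.1 + 1) ^ (β i).1) = 1 := by
  have hmul : (PowerSeries.mk a) * (PowerSeries.mk fun m => Aux19.Bcoef a m) = 1 := by
    ext n
    rw [PowerSeries.coeff_mul]
    rw [Finset.Nat.sum_antidiagonal_eq_sum_range_succ_mk]
    simp only [PowerSeries.coeff_mk, PowerSeries.coeff_one]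
    rcases Nat.eq_zero_or_pos n with rfl | hn
    · simp [Aux19.Bcoef_zero, ha]
    · rw [Aux19.key a ha hn, if_neg (Nat.pos_iff_ne_zero.1 hn)]
  have hmul' : (PowerSeries.mk a) *
      (PowerSeries.mk fun m =>
        ∑ β ∈ Cset m, (Mcoef β : R) * ∏ i : Fin m, a (i.1 + 1) ^ (β i).1) = 1 := hmul
  exact ⟨IsUnit.of_mul_eq_one _ hmul', hmul'⟩
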